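/- Let T > 0, p ∈ (1,∞) with conjugate exponent q (1/p + 1/q = 1), and let {X(t)}_{t∈[0,T]} and {φ_t} be an evolving family of Banach spaces as in the context, with X₀ separable and each X(t) reflexive. Let g be a function with g(t) ∈ X(t)^* for each t such that t ↦ φ_t^*(g(t)) belongs to L^q(0,T;X₀*), where φ_t^* : X(t)^* → X₀* is the adjoint of φ_t. Then: (i) for every f with f(t) ∈ X(t) whose pullback t ↦ φ_t^{-1}(f(t)) lies in L^p(0,T;X₀), one has |∫₀^T ⟨g(t), f(t)⟩_{X(t)^*,X(t)} dt| ≤ (∫₀^T ‖g(t)‖_{X(t)^*}^q dt)^{1/q} · (∫₀^T ‖f(t)‖_{X(t)}^p dt)^{1/p}; and (ii) the supremum of ∫₀^T ⟨g(t), f(t)⟩_{X(t)^*,X(t)} dt over all such f with (∫₀^T ‖f(t)‖_{X(t)}^p dt)^{1/p} ≤ 1 equals (∫₀^T ‖g(t)‖_{X(t)^*}^q dt)^{1/q}. -/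

import Mathlib

open MeasureTheory

section auxlemmas

variable {E F : Type*} [NormedAddCommGroup E] [NormedSpace ℝ E]
  [NormedAddCommGroup F] [NormedSpace ℝ F]

lemma aux_ratio_le (φ : E ≃L[ℝ] F) (ℓ : F →L[ℝ] ℝ) (u : E) :
    ℓ (φ u) / ‖φ u‖ ≤ ‖ℓ‖ := by
  rcases eq_or_ne ‖φ u‖ 0 with h | h
  · rw [h, div_zero]; exact norm_nonneg _
  · have hpos : 0 < ‖φ u‖ := (norm_nonneg _).lt_of_ne' h
    rw [div_le_iff₀ hpos]
    calc ℓ (φ u) ≤ |ℓ (φ u)| := le_abs_self _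
      _ = ‖ℓ (φ u)‖ := (Real.norm_eq_abs _).symm
      _ ≤ ‖ℓ‖ * ‖φ u‖ := ℓ.le_opNorm _

lemma aux_exists_ratio (φ : E ≃L[ℝ] F) {v : ℕ → E} (hv : DenseRange v)
    (ℓ : F →L[ℝ] ℝ) {r : ℝ} (hr : r < ‖ℓ‖) :
    ∃ n, r < ℓ (φ (v n)) / ‖φ (v n)‖ := by
  by_cases hℓ : ℓ = 0
  · refine ⟨0, ?_⟩
    have : r < 0 := by simpa [hℓ] using hr
    simpa [hℓ] using this
  · have hℓpos : 0 < ‖ℓ‖ := norm_pos_iff.2 hℓ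
    have hr₀ : max r 0 < ‖ℓ‖ := max_lt hr hℓpos
    obtain ⟨x, hx1, hx2⟩ := ℓ.exists_lt_apply_of_lt_opNorm hr₀
    obtain ⟨y, hy1, hy2⟩ : ∃ y : F, ‖y‖ < 1 ∧ max r 0 < ℓ y := by
      rcases le_or_gt 0 (ℓ x) with h | h
      · exact ⟨x, hx1, by rwa [Real.norm_eq_abs, abs_of_nonneg h] at hx2⟩
      · refine ⟨-x, by simpa using hx1, ?_⟩
        rw [map_neg]
        rwa [Real.norm_eq_abs, abs_of_neg h] at hx2
    have hy0 : y ≠ 0 := by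
      rintro rfl
      simp only [map_zero] at hy2
      exact absurd hy2 (not_lt.2 (le_max_right r 0))
    set u₀ := φ.symm y with hu₀
    have hφu₀ : φ u₀ = y := φ.apply_symm_apply y
    have hψcont : ContinuousAt (fun u => ℓ (φ u) / ‖φ u‖) u₀ := by
      refine ContinuousAt.div ?_ ?_ ?_
      · exact (ℓ.continuous.comp φ.continuous).continuousAt
      · exact (continuous_norm.comp φ.continuous).continuousAt
      · rw [hφu₀]; exact norm_ne_zero_iff.2 hy0
    have hval : r < ℓ (φ u₀) / ‖φ u₀‖ := by
      rw [hφu₀]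
      have h1 : 0 < ℓ y := lt_of_le_of_lt (le_max_right r 0) hy2
      have hny : 0 < ‖y‖ := norm_pos_iff.2 hy0
      have h2 : ℓ y ≤ ℓ y / ‖y‖ := by
        rw [le_div_iff₀ hny]
        exact mul_le_of_le_one_right h1.le hy1.le
      exact lt_of_le_of_lt (le_max_left r 0) (lt_of_lt_of_le hy2 h2)
    have hev : ∀ᶠ u in nhds u₀, r < ℓ (φ u) / ‖φ u‖ :=
      hψcont.eventually (eventually_gt_nhds hval)
    obtain ⟨U, hUsub, hUopen, hu₀U⟩ := mem_nhds_iff.1 hev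
    obtain ⟨n, hn⟩ := hv.exists_mem_open hUopen ⟨u₀, hu₀U⟩
    exact ⟨n, hUsub hn⟩

lemma aux_norm_eq_iSup (φ : E ≃L[ℝ] F) {v : ℕ → E} (hv : DenseRange v) (ℓ : F →L[ℝ] ℝ) :
    ‖ℓ‖ = ⨆ n, ℓ (φ (v n)) / ‖φ (v n)‖ := by
  have hbdd : BddAbove (Set.range fun n => ℓ (φ (v n)) / ‖φ (v n)‖) := by
    refine ⟨‖ℓ‖, ?_⟩
    rintro _ ⟨n, rfl⟩
    exact aux_ratio_le φ ℓ (v n)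
  refine le_antisymm ?_ (ciSup_le fun n => aux_ratio_le φ ℓ (v n))
  refine le_of_forall_lt fun r hr => ?_
  rw [lt_ciSup_iff hbdd]
  exact aux_exists_ratio φ hv ℓ hr

lemma aux_normφ_eq_iInf (φ : E ≃L[ℝ] F) {C : ℝ} (hC : 0 ≤ C)
    (hfwd : ∀ x : E, ‖φ x‖ ≤ C * ‖x‖) {v : ℕ → E} (hv : DenseRange v) (x : E) :
    ‖φ x‖ = ⨅ n, (‖φ (v n)‖ + C * ‖x - v n‖) := by
  have hbdd : BddBelow (Set.range fun n => ‖φ (v n)‖ + C * ‖x - v n‖) := by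
    refine ⟨0, ?_⟩
    rintro _ ⟨n, rfl⟩
    positivity
  refine le_antisymm (le_ciInf fun n => ?_) ?_
  · have hrw : ‖φ x‖ = ‖φ (v n) + φ (x - v n)‖ := by
      rw [← map_add]
      have h : v n + (x - v n) = x := by abel
      rw [h]
    rw [hrw]
    calc ‖φ (v n) + φ (x - v n)‖
      _ ≤ ‖φ (v n)‖ + ‖φ (x - v n)‖ := norm_add_le _ _
      _ ≤ ‖φ (v n)‖ + C * ‖x - v n‖ := by linarith [hfwd (x - v n)]
  · refine le_of_forall_pos_le_add fun ε hε => ?_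
    obtain ⟨n, hn⟩ : ∃ n, ‖x - v n‖ < ε / (2 * C + 1) := by
      have := Metric.denseRange_iff.1 hv x (ε / (2 * C + 1)) (by positivity)
      obtain ⟨n, hn⟩ := this
      exact ⟨n, by rwa [dist_eq_norm] at hn⟩
    refine ciInf_le_of_le hbdd n ?_
    have h1 : ‖φ (v n)‖ ≤ ‖φ x‖ + C * ‖x - v n‖ := by
      have hrw : ‖φ (v n)‖ = ‖φ x + φ (v n - x)‖ := by
        rw [← map_add]
        have h : x + (v n - x) = v n := by abel
        rw [h]
      rw [hrw]
      calc ‖φ x + φ (v n - x)‖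
        _ ≤ ‖φ x‖ + ‖φ (v n - x)‖ := norm_add_le _ _
        _ ≤ ‖φ x‖ + C * ‖v n - x‖ := by linarith [hfwd (v n - x)]
        _ = ‖φ x‖ + C * ‖x - v n‖ := by rw [norm_sub_rev]
    have h2 : C * ‖x - v n‖ ≤ C * (ε / (2 * C + 1)) :=
      mul_le_mul_of_nonneg_left hn.le hC
    have h4 : 2 * C * (ε / (2 * C + 1)) ≤ ε := by
      rw [mul_div_assoc', div_le_iff₀ (by positivity)]
      nlinarith
    linarith

lemma memℒp_of_integrable_rpow {α : Type*} [MeasurableSpace α] {μ : Measure α} {q : ℝ}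
    (hq : 0 < q) {a : α → ℝ} (ha : AEStronglyMeasurable a μ)
    (h : Integrable (fun t => a t ^ q) μ) (hnn : ∀ᵐ t ∂μ, 0 ≤ a t) :
    MemLp a (ENNReal.ofReal q) μ := by
  have hq0 : ENNReal.ofReal q ≠ 0 := by simp [ENNReal.ofReal_eq_zero, not_le, hq]
  have hqt : ENNReal.ofReal q ≠ ⊤ := ENNReal.ofReal_ne_top
  have h1 : MemLp (fun t => ‖a t‖ ^ (ENNReal.ofReal q).toReal)
      (ENNReal.ofReal q / ENNReal.ofReal q) μ := by
    rw [ENNReal.div_self hq0 hqt, memLp_one_iff_integrable]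
    apply h.congr
    filter_upwards [hnn] with t ht
    rw [Real.norm_eq_abs, abs_of_nonneg ht, ENNReal.toReal_ofReal hq.le]
  exact (memLp_norm_rpow_iff ha hq0 hqt).1 h1

end auxlemmas

set_option maxHeartbeats 1000000

/-- Each `g ∈ L^q_{X^*}` defines, via the duality pairing, a bounded linear
functional on `L^p_X` whose norm equals `‖g‖_{L^q_{X^*}}` (Lemma 2.8): Hölder's
inequality holds, and the supremum of the pairing over the unit ball of `L^p_X`
equals `(∫₀^T ‖g(t)‖_{X(t)^*}^q dt)^{1/q}`. -/
theorem dual_functional_norm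
    (T : ℝ) (hT : 0 < T) (p q : ℝ) (hp : 1 < p) (hpq : 1 / p + 1 / q = 1)
    (X : ℝ → Type*) [∀ t, NormedAddCommGroup (X t)] [∀ t, NormedSpace ℝ (X t)]
    [∀ t, CompleteSpace (X t)]
    [TopologicalSpace.SeparableSpace (X 0)]
    (hrefl : ∀ t : ℝ, Function.Surjective (NormedSpace.inclusionInDoubleDual ℝ (X t)))
    (φ : ∀ t : ℝ, X 0 ≃L[ℝ] X t)
    (hφ0 : φ 0 = ContinuousLinearEquiv.refl ℝ (X 0))
    (C : ℝ) (hC : 1 ≤ C)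
    (hfwd : ∀ t ∈ Set.Icc (0:ℝ) T, ∀ v : X 0, ‖φ t v‖ ≤ C * ‖v‖)
    (hbwd : ∀ t ∈ Set.Icc (0:ℝ) T, ∀ w : X t, ‖(φ t).symm w‖ ≤ C * ‖w‖)
    (hmeas : ∀ v : X 0, Measurable fun t => ‖φ t v‖)
    (g : ∀ t : ℝ, StrongDual ℝ (X t))
    (hg1 : AEStronglyMeasurable (fun t => (g t).comp (φ t).toContinuousLinearMap)
      (volume.restrict (Set.Ioc 0 T)))
    (hg2 : IntegrableOn (fun t => ‖(g t).comp (φ t).toContinuousLinearMap‖ ^ q)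
      (Set.Ioc 0 T)) :
    -- (i) Hölder's inequality for the duality pairing:
    (∀ f : ∀ t : ℝ, X t,
      AEStronglyMeasurable (fun t => (φ t).symm (f t)) (volume.restrict (Set.Ioc 0 T)) →
      IntegrableOn (fun t => ‖(φ t).symm (f t)‖ ^ p) (Set.Ioc 0 T) →
      |∫ t in Set.Ioc 0 T, g t (f t)| ≤
        (∫ t in Set.Ioc 0 T, ‖g t‖ ^ q) ^ (1 / q) *
          (∫ t in Set.Ioc 0 T, ‖f t‖ ^ p) ^ (1 / p)) ∧
    -- (ii) the norm of the induced functional is attained: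
    IsLUB {r : ℝ | ∃ f : ∀ t : ℝ, X t,
        AEStronglyMeasurable (fun t => (φ t).symm (f t)) (volume.restrict (Set.Ioc 0 T)) ∧
        IntegrableOn (fun t => ‖(φ t).symm (f t)‖ ^ p) (Set.Ioc 0 T) ∧
        (∫ t in Set.Ioc 0 T, ‖f t‖ ^ p) ^ (1 / p) ≤ 1 ∧
        r = ∫ t in Set.Ioc 0 T, g t (f t)}
      ((∫ t in Set.Ioc 0 T, ‖g t‖ ^ q) ^ (1 / q)) := by
  classical
  have hp0 : (0:ℝ) < p := lt_trans zero_lt_one hp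
  have hq : Real.HolderConjugate p q := Real.holderConjugate_iff.mpr ⟨hp, by rw [← one_div, ← one_div]; exact hpq⟩
  have hq1 : 1 < q := hq.symm.lt
  have hq0 : (0:ℝ) < q := hq.symm.pos
  have hC0 : (0:ℝ) < C := lt_of_lt_of_le zero_lt_one hC
  set I : Set ℝ := Set.Ioc 0 T with hIdef
  set μ : Measure ℝ := volume.restrict I with hμdef
  have hIm : MeasurableSet I := measurableSet_Ioc
  have hae_mem : ∀ᵐ t ∂μ, t ∈ I := ae_restrict_mem hIm
  have hIcc : ∀ t ∈ I, t ∈ Set.Icc (0:ℝ) T := fun t ht => ⟨ht.1.le, ht.2⟩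
  set G : ℝ → (X 0 →L[ℝ] ℝ) := fun t => (g t).comp (φ t).toContinuousLinearMap with hGdef
  -- comparison of norms
  have hA1 : ∀ t ∈ Set.Icc (0:ℝ) T, ‖g t‖ ≤ C * ‖G t‖ := by
    intro t ht
    refine ContinuousLinearMap.opNorm_le_bound _
      (mul_nonneg hC0.le (norm_nonneg _)) fun w => ?_
    have hgw : g t w = G t ((φ t).symm w) := by
      simp [hGdef]
    rw [hgw]
    calc ‖G t ((φ t).symm w)‖ ≤ ‖G t‖ * ‖(φ t).symm w‖ := (G t).le_opNorm _
      _ ≤ ‖G t‖ * (C * ‖w‖) :=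
        mul_le_mul_of_nonneg_left (hbwd t ht w) (norm_nonneg _)
      _ = C * ‖G t‖ * ‖w‖ := by ring
  -- dense sequence
  haveI : Nonempty (X 0) := ⟨0⟩
  set v : ℕ → X 0 := TopologicalSpace.denseSeq (X 0) with hvdef
  have hv : DenseRange v := TopologicalSpace.denseRange_denseSeq (X 0)
  -- a.e. measurability of t ↦ ‖g t‖
  have hnorm_eq : ∀ t : ℝ, ‖g t‖ = ⨆ n, G t (v n) / ‖φ t (v n)‖ := by
    intro t
    simpa [hGdef] using aux_norm_eq_iSup (φ t) hv (g t)
  have hGn : ∀ n, AEMeasurable (fun t => G t (v n)) μ := fun n =>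
    ((ContinuousLinearMap.apply ℝ ℝ (v n)).continuous.comp_aestronglyMeasurable
      hg1).aemeasurable
  have hratio : ∀ n : ℕ, AEMeasurable (fun t => G t (v n) / ‖φ t (v n)‖) μ :=
    fun n => (hGn n).div (hmeas (v n)).aemeasurable
  have hnormg : AEMeasurable (fun t => ‖g t‖) μ := by
    have h1 : AEMeasurable (fun t => ⨆ n, G t (v n) / ‖φ t (v n)‖) μ :=
      AEMeasurable.iSup hratio
    exact h1.congr (Filter.EventuallyEq.symm (Filter.Eventually.of_forall hnorm_eq))
  -- integrability of ‖g‖^q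
  have hgq_int : Integrable (fun t => ‖g t‖ ^ q) μ := by
    refine Integrable.mono' (hg2.const_mul (C ^ q))
      ((hnormg.pow_const q).aestronglyMeasurable) ?_
    filter_upwards [hae_mem] with t ht
    have h1 : ‖g t‖ ≤ C * ‖G t‖ := hA1 t (hIcc t ht)
    have h2 : ‖g t‖ ^ q ≤ (C * ‖G t‖) ^ q :=
      Real.rpow_le_rpow (norm_nonneg _) h1 hq0.le
    rw [Real.norm_eq_abs, abs_of_nonneg (Real.rpow_nonneg (norm_nonneg _) _)]
    calc ‖g t‖ ^ q ≤ (C * ‖G t‖) ^ q := h2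
      _ = C ^ q * ‖G t‖ ^ q := Real.mul_rpow hC0.le (norm_nonneg _)
  have hgnn : ∀ᵐ t ∂μ, 0 ≤ ‖g t‖ := Filter.Eventually.of_forall fun t => norm_nonneg _
  have hMg : MemLp (fun t => ‖g t‖) (ENNReal.ofReal q) μ :=
    memℒp_of_integrable_rpow hq0 hnormg.aestronglyMeasurable hgq_int hgnn
  have hIq_nonneg : 0 ≤ ∫ t in I, ‖g t‖ ^ q :=
    integral_nonneg fun t => Real.rpow_nonneg (norm_nonneg _) _
  -- ============ part (i), packaged with integrability info ============
  have key : ∀ f : ∀ t : ℝ, X t,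
      AEStronglyMeasurable (fun t => (φ t).symm (f t)) μ →
      IntegrableOn (fun t => ‖(φ t).symm (f t)‖ ^ p) I →
      Integrable (fun t => g t (f t)) μ ∧
      Integrable (fun t => ‖f t‖ ^ p) μ ∧
      |∫ t in I, g t (f t)| ≤
        (∫ t in I, ‖g t‖ ^ q) ^ (1 / q) * (∫ t in I, ‖f t‖ ^ p) ^ (1 / p) := by
    intro f hfm hfi
    set u : ℝ → X 0 := fun t => (φ t).symm (f t) with hudef
    have hfu : ∀ t, f t = φ t (u t) := fun t => ((φ t).apply_symm_apply (f t)).symm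
    -- a.e. measurability of ‖f ·‖
    have hfn : AEMeasurable (fun t => ‖f t‖) μ := by
      have h1 : ∀ n : ℕ, AEMeasurable (fun t => ‖φ t (v n)‖ + C * ‖u t - v n‖) μ :=
        fun n => (hmeas (v n)).aemeasurable.add
          (((hfm.sub aestronglyMeasurable_const).norm.aemeasurable).const_mul C)
      have h2 : AEMeasurable (fun t => ⨅ n, (‖φ t (v n)‖ + C * ‖u t - v n‖)) μ :=
        AEMeasurable.iInf h1
      refine h2.congr ?_
      filter_upwards [hae_mem] with t ht
      rw [← aux_normφ_eq_iInf (φ t) hC0.le (hfwd t (hIcc t ht)) hv (u t), ← hfu t]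
    have hfnn : ∀ᵐ t ∂μ, 0 ≤ ‖f t‖ := Filter.Eventually.of_forall fun t => norm_nonneg _
    have hfp_int : Integrable (fun t => ‖f t‖ ^ p) μ := by
      refine Integrable.mono' (hfi.const_mul (C ^ p))
        ((hfn.pow_const p).aestronglyMeasurable) ?_
      filter_upwards [hae_mem] with t ht
      have h1 : ‖f t‖ ≤ C * ‖u t‖ := by
        rw [hfu t]; exact hfwd t (hIcc t ht) (u t)
      rw [Real.norm_eq_abs, abs_of_nonneg (Real.rpow_nonneg (norm_nonneg _) _)]
      calc ‖f t‖ ^ p ≤ (C * ‖u t‖) ^ p :=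
            Real.rpow_le_rpow (norm_nonneg _) h1 hp0.le
        _ = C ^ p * ‖u t‖ ^ p := Real.mul_rpow hC0.le (norm_nonneg _)
    have hMf : MemLp (fun t => ‖f t‖) (ENNReal.ofReal p) μ :=
      memℒp_of_integrable_rpow hp0 hfn.aestronglyMeasurable hfp_int hfnn
    -- the pairing
    have hpair_eq : (fun t => g t (f t)) = fun t => G t (u t) :=
      funext fun t => by rw [hGdef]; simp [hfu t]
    have hpair_meas : AEStronglyMeasurable (fun t => g t (f t)) μ := by
      rw [hpair_eq]
      exact isBoundedBilinearMap_apply.continuous.comp_aestronglyMeasurable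
        (hg1.prodMk hfm)
    have hpair_bound : ∀ t, ‖g t (f t)‖ ≤ ‖g t‖ * ‖f t‖ := fun t => (g t).le_opNorm (f t)
    have hprod_int : Integrable (fun t => ‖g t‖ * ‖f t‖) μ := by
      refine Integrable.mono' ((hgq_int.div_const q).add (hfp_int.div_const p))
        ((hnormg.mul hfn).aestronglyMeasurable) ?_
      refine Filter.Eventually.of_forall fun t => ?_
      rw [Real.norm_eq_abs, abs_of_nonneg (mul_nonneg (norm_nonneg _) (norm_nonneg _))]
      exact Real.young_inequality_of_nonneg (norm_nonneg _) (norm_nonneg _) hq.symm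
    have hpair_int : Integrable (fun t => g t (f t)) μ :=
      hprod_int.mono' hpair_meas (Filter.Eventually.of_forall fun t => by
        simpa [Real.norm_eq_abs] using hpair_bound t)
    refine ⟨hpair_int, hfp_int, ?_⟩
    have hH : ∫ t in I, ‖g t‖ * ‖f t‖ ≤
        (∫ t in I, ‖g t‖ ^ q) ^ (1 / q) * (∫ t in I, ‖f t‖ ^ p) ^ (1 / p) :=
      integral_mul_le_Lp_mul_Lq_of_nonneg hq.symm hgnn hfnn hMg hMf
    calc |∫ t in I, g t (f t)| = ‖∫ t in I, g t (f t)‖ := (Real.norm_eq_abs _).symm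
      _ ≤ ∫ t in I, ‖g t (f t)‖ := norm_integral_le_integral_norm _
      _ ≤ ∫ t in I, ‖g t‖ * ‖f t‖ := by
          refine integral_mono hpair_int.norm hprod_int fun t => ?_
          exact hpair_bound t
      _ ≤ _ := hH
  refine ⟨fun f hfm hfi => (key f hfm hfi).2.2, ?_⟩
  -- ============ part (ii) ============
  have hQnn : 0 ≤ (∫ t in I, ‖g t‖ ^ q) ^ (1 / q) := Real.rpow_nonneg hIq_nonneg _
  constructor
  · -- upper bound
    rintro r ⟨f, hfm, hfi, hle, rfl⟩
    obtain ⟨hpair_int, hfp_int, hH⟩ := key f hfm hfi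
    have hfpnn : 0 ≤ (∫ t in I, ‖f t‖ ^ p) ^ (1 / p) :=
      Real.rpow_nonneg (integral_nonneg fun t => Real.rpow_nonneg (norm_nonneg _) _) _
    calc ∫ t in I, g t (f t) ≤ |∫ t in I, g t (f t)| := le_abs_self _
      _ ≤ (∫ t in I, ‖g t‖ ^ q) ^ (1 / q) * (∫ t in I, ‖f t‖ ^ p) ^ (1 / p) := hH
      _ ≤ (∫ t in I, ‖g t‖ ^ q) ^ (1 / q) * 1 := mul_le_mul_of_nonneg_left hle hQnn
      _ = (∫ t in I, ‖g t‖ ^ q) ^ (1 / q) := mul_one _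
  · -- least upper bound
    intro b hb
    have hb0 : 0 ≤ b := by
      refine hb ⟨fun t => (0 : X t), ?_, ?_, ?_, ?_⟩
      · simpa using aestronglyMeasurable_const (b := (0 : X 0)) (μ := μ)
      · simpa [Real.zero_rpow hp0.ne'] using
          (integrable_zero ℝ ℝ μ : Integrable (fun _ : ℝ => (0:ℝ)) μ)
      · have h1 : (∫ t in I, ‖(fun t => (0 : X t)) t‖ ^ p) = (0:ℝ) := by
          simp [Real.zero_rpow hp0.ne']
        rw [h1, Real.zero_rpow (by positivity : (1:ℝ)/p ≠ 0)]
        norm_num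
      · simp
    rcases eq_or_lt_of_le hIq_nonneg with hIq0 | hIqpos
    · rw [← hIq0, Real.zero_rpow (by positivity : 1/q ≠ 0)]
      exact hb0
    · -- main construction
      set Iq : ℝ := ∫ t in I, ‖g t‖ ^ q with hIqdef
      have hIqne : Iq ≠ 0 := ne_of_gt hIqpos
      have hQpos : 0 < Iq ^ (1 / q) := Real.rpow_pos_of_pos hIqpos _
      have hstep : ∀ δ : ℝ, 0 < δ → δ < 1 → (1 - δ) * Iq ^ (1 / q) ≤ b := by
        intro δ hδ0 hδ1
        obtain ⟨G', hG'm, hGG'⟩ := hg1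
        obtain ⟨a', ha'm, haa'⟩ := hnormg
        have hZ : ∀ᵐ t ∂μ, G t = G' t ∧ a' t = ‖g t‖ ∧ t ∈ Set.Icc (0:ℝ) T := by
          filter_upwards [hGG', haa', hae_mem] with t h1 h2 h3
          exact ⟨h1, h2.symm, hIcc t h3⟩
        set B : Set ℝ :=
          {t | ¬ (G t = G' t ∧ a' t = ‖g t‖ ∧ t ∈ Set.Icc (0:ℝ) T)} with hBdef
        have hBnull : μ B = 0 := by
          rw [ae_iff] at hZ
          exact hZ
        set E : Set ℝ := toMeasurable μ B with hEdef
        have hEm : MeasurableSet E := measurableSet_toMeasurable μ B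
        have hEnull : μ E = 0 := by
          rw [hEdef, measure_toMeasurable]
          exact hBnull
        have hBE : B ⊆ E := subset_toMeasurable μ B
        set S : Set ℝ := (I ∩ {t | 0 < a' t}) \ E with hSdef
        have hSm : MeasurableSet S :=
          (hIm.inter (measurableSet_lt measurable_const ha'm)).diff hEm
        have hSgood : ∀ t ∈ S,
            G t = G' t ∧ a' t = ‖g t‖ ∧ t ∈ Set.Icc (0:ℝ) T ∧ 0 < a' t := by
          intro t ht
          obtain ⟨⟨htI, hta⟩, htE⟩ := ht
          have hnB : t ∉ B := fun hB => htE (hBE hB)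
          have hZt := not_not.1 hnB
          exact ⟨hZt.1, hZt.2.1, hZt.2.2, hta⟩
        set P : ℝ → ℕ → Prop := fun t n =>
          t ∉ S ∨ ((1 - δ) * a' t * ‖φ t (v n)‖ < G' t (v n) ∧ 0 < ‖φ t (v n)‖)
          with hPdef
        have hPex : ∀ t, ∃ n, P t n := by
          intro t
          by_cases ht : t ∈ S
          · obtain ⟨hGt, hat, htIcc, hpos⟩ := hSgood t ht
            have h1 : (1 - δ) * a' t < ‖g t‖ := by
              rw [← hat]; nlinarith
            obtain ⟨n, hn⟩ := aux_exists_ratio (φ t) hv (g t) h1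
            have hden : 0 < ‖φ t (v n)‖ := by
              by_contra hcon
              push_neg at hcon
              have h0 : ‖φ t (v n)‖ = 0 := le_antisymm hcon (norm_nonneg _)
              rw [h0, div_zero] at hn
              nlinarith
            have h2 : (1 - δ) * a' t * ‖φ t (v n)‖ < g t (φ t (v n)) :=
              (lt_div_iff₀ hden).1 hn
            refine ⟨n, Or.inr ⟨?_, hden⟩⟩
            rw [← hGt]
            simpa [hGdef] using h2
          · exact ⟨0, Or.inl ht⟩
        have hPm : ∀ n, MeasurableSet {t | P t n} := by
          intro n
          have hG'n : Measurable fun t => G' t (v n) :=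
            ((ContinuousLinearMap.apply ℝ ℝ (v n)).continuous.comp_stronglyMeasurable
              hG'm).measurable
          have h1 : MeasurableSet
              {t | (1 - δ) * a' t * ‖φ t (v n)‖ < G' t (v n) ∧ 0 < ‖φ t (v n)‖} :=
            (measurableSet_lt ((ha'm.const_mul (1 - δ)).mul (hmeas (v n))) hG'n).inter
              (measurableSet_lt measurable_const (hmeas (v n)))
          have h2 : {t | P t n} = Sᶜ ∪
              {t | (1 - δ) * a' t * ‖φ t (v n)‖ < G' t (v n) ∧ 0 < ‖φ t (v n)‖} :=
            Set.ext fun t => Iff.rfl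
          rw [h2]
          exact hSm.compl.union h1
        set N : ℝ → ℕ := fun t => Nat.find (hPex t) with hNdef
        have hNm : Measurable N := measurable_find hPex hPm
        have hPN : ∀ t, P t (N t) := fun t => Nat.find_spec (hPex t)
        set d : ℝ → ℝ := fun t => ‖φ t (v (N t))‖ with hddef
        have hdm : Measurable d := by
          have h1 : Measurable fun z : ℝ × ℕ => ‖φ z.1 (v z.2)‖ :=
            measurable_from_prod_countable_left fun n => hmeas (v n)
          exact h1.comp (measurable_id.prodMk hNm)
        set c : ℝ → ℝ :=
          fun t => S.indicator (fun s => a' s ^ (q - 1) / (Iq ^ (1/p) * d s)) t with hcdef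
        have hcm : Measurable c :=
          ((ha'm.pow_const (q - 1)).div (hdm.const_mul _)).indicator hSm
        set f : ∀ t : ℝ, X t := fun t => φ t (c t • v (N t)) with hfdef
        have hu_eq : (fun t => (φ t).symm (f t)) = fun t => c t • v (N t) :=
          funext fun t => (φ t).symm_apply_apply _
        have hu_meas : AEStronglyMeasurable (fun t => c t • v (N t)) μ := by
          have hF : Continuous fun z : ℝ × ℕ => z.1 • v z.2 :=
            continuous_fst.smul (continuous_of_discreteTopology.comp continuous_snd)
          have hcn : Measurable fun t => (c t, N t) := hcm.prodMk hNm
          exact hF.comp_aestronglyMeasurable hcn.aestronglyMeasurable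
        have hfm' : AEStronglyMeasurable (fun t => (φ t).symm (f t)) μ := by
          rw [hu_eq]; exact hu_meas
        have hq1p : (q - 1) * p = q := hq.symm.sub_one_mul_conj
        have hIqp_pos : 0 < Iq ^ (1/p) := Real.rpow_pos_of_pos hIqpos _
        have hcS : ∀ t ∈ S, c t = a' t ^ (q - 1) / (Iq ^ (1/p) * d t) := fun t ht =>
          Set.indicator_of_mem ht _
        have hc0 : ∀ t ∉ S, c t = 0 := fun t ht => Set.indicator_of_notMem ht _
        have hdS : ∀ t ∈ S, 0 < d t := by
          intro t ht
          rcases hPN t with h | h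
          · exact absurd ht h
          · exact h.2
        have hcpos : ∀ t ∈ S, 0 < c t := by
          intro t ht
          rw [hcS t ht]
          exact div_pos (Real.rpow_pos_of_pos (hSgood t ht).2.2.2 _)
            (mul_pos hIqp_pos (hdS t ht))
        have hfzero : ∀ t ∉ S, f t = 0 := by
          intro t ht
          simp only [hfdef, hc0 t ht, zero_smul, map_zero]
        have hfnorm : ∀ t, ‖f t‖ ^ p = S.indicator (fun s => a' s ^ q) t / Iq := by
          intro t
          by_cases ht : t ∈ S
          · rw [Set.indicator_of_mem ht]
            have hd := hdS t ht
            have hapos := (hSgood t ht).2.2.2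
            have h1 : ‖f t‖ = c t * d t := by
              simp only [hfdef, _root_.map_smul, norm_smul, Real.norm_eq_abs,
                abs_of_nonneg (hcpos t ht).le, hddef]
            have h2 : c t * d t = a' t ^ (q - 1) / Iq ^ (1/p) := by
              rw [hcS t ht]
              field_simp [(hdS t ht).ne', hIqp_pos.ne']
            rw [h1, h2,
              Real.div_rpow (Real.rpow_nonneg hapos.le _) (Real.rpow_nonneg hIq_nonneg _),
              ← Real.rpow_mul hapos.le, ← Real.rpow_mul hIq_nonneg, hq1p,
              one_div_mul_cancel hp0.ne', Real.rpow_one]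
          · rw [Set.indicator_of_notMem ht, hfzero t ht]
            simp [Real.zero_rpow hp0.ne']
        have hEc : ∀ᵐ t ∂μ, t ∉ E := measure_eq_zero_iff_ae_notMem.mp hEnull
        have hind_ae : (fun t => S.indicator (fun s => a' s ^ q) t)
            =ᵐ[μ] fun t => ‖g t‖ ^ q := by
          filter_upwards [hZ, hEc, hae_mem] with t hZt hEt hIt
          by_cases hpos : 0 < a' t
          · have hmem : t ∈ S := Set.mem_diff_of_mem (Set.mem_inter hIt hpos) hEt
            rw [Set.indicator_of_mem hmem, hZt.2.1]
          · have h1 : ‖g t‖ = 0 := by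
              have h2 : a' t ≤ 0 := not_lt.1 hpos
              have h3 : 0 ≤ a' t := hZt.2.1 ▸ norm_nonneg _
              rw [← hZt.2.1]
              linarith
            have hnotS : t ∉ S := fun hS => hpos hS.1.2
            rw [Set.indicator_of_notMem hnotS, h1, Real.zero_rpow hq0.ne']
        have hind_int : Integrable (fun t => S.indicator (fun s => a' s ^ q) t) μ :=
          hgq_int.congr hind_ae.symm
        have hJ : ∫ t in I, S.indicator (fun s => a' s ^ q) t = Iq := by
          rw [hIqdef]
          exact integral_congr_ae hind_ae
        have hup_meas : AEStronglyMeasurable (fun t => ‖(φ t).symm (f t)‖ ^ p) μ := by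
          have h1 : (fun t => ‖(φ t).symm (f t)‖ ^ p) = fun t => ‖c t • v (N t)‖ ^ p :=
            funext fun t => by rw [(φ t).symm_apply_apply]
          rw [h1]
          exact (hu_meas.norm.aemeasurable.pow_const p).aestronglyMeasurable
        have hfi' : IntegrableOn (fun t => ‖(φ t).symm (f t)‖ ^ p) I := by
          refine Integrable.mono' ((hind_int.div_const Iq).const_mul (C ^ p)) hup_meas ?_
          filter_upwards [hae_mem] with t ht
          have h1 : ‖(φ t).symm (f t)‖ ≤ C * ‖f t‖ := hbwd t (hIcc t ht) (f t)
          rw [Real.norm_eq_abs, abs_of_nonneg (Real.rpow_nonneg (norm_nonneg _) _)]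
          calc ‖(φ t).symm (f t)‖ ^ p ≤ (C * ‖f t‖) ^ p :=
                Real.rpow_le_rpow (norm_nonneg _) h1 hp0.le
            _ = C ^ p * ‖f t‖ ^ p := Real.mul_rpow hC0.le (norm_nonneg _)
            _ = C ^ p * (S.indicator (fun s => a' s ^ q) t / Iq) := by rw [hfnorm t]
        have hintf : (∫ t in I, ‖f t‖ ^ p) = 1 := by
          have h1 : (∫ t in I, ‖f t‖ ^ p)
              = ∫ t in I, S.indicator (fun s => a' s ^ q) t / Iq :=
            integral_congr_ae (Filter.Eventually.of_forall hfnorm)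
          rw [h1, integral_div, hJ, div_self hIqne]
        have hle1 : (∫ t in I, ‖f t‖ ^ p) ^ (1/p) ≤ 1 := by
          rw [hintf, Real.one_rpow]
        have hpair_ge : ∀ t,
            ((1 - δ) / Iq ^ (1/p)) * S.indicator (fun s => a' s ^ q) t ≤ g t (f t) := by
          intro t
          by_cases ht : t ∈ S
          · obtain ⟨hGt, hat, htIcc, hpos⟩ := hSgood t ht
            rcases hPN t with h | hP'
            · exact absurd ht h
            obtain ⟨hnum, hden⟩ := hP'
            have hgf : g t (f t) = c t * G' t (v (N t)) := by
              have h0 : g t (f t) = c t * G t (v (N t)) := by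
                simp [hfdef, hGdef, _root_.map_smul]
              rw [h0, hGt]
            have h2 : c t * ((1 - δ) * a' t * d t) ≤ c t * G' t (v (N t)) := by
              refine mul_le_mul_of_nonneg_left ?_ (hcpos t ht).le
              exact hnum.le
            have hmulq : a' t ^ (q - 1) * a' t = a' t ^ q := by
              calc a' t ^ (q - 1) * a' t = a' t ^ (q - 1) * a' t ^ (1:ℝ) := by
                    rw [Real.rpow_one]
                _ = a' t ^ (q - 1 + 1) := (Real.rpow_add hpos _ _).symm
                _ = a' t ^ q := by norm_num
            have h3 : c t * ((1 - δ) * a' t * d t)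
                = (1 - δ) / Iq ^ (1/p) * a' t ^ q := by
              have hdne : d t ≠ 0 := (hdS t ht).ne'
              have hIqpne : Iq ^ (1/p) ≠ 0 := hIqp_pos.ne'
              have h4 : c t * ((1 - δ) * a' t * d t)
                  = (1 - δ) * (a' t ^ (q - 1) * a' t) / Iq ^ (1/p) := by
                rw [hcS t ht]
                field_simp
              rw [h4, hmulq]
              ring
            rw [Set.indicator_of_mem ht]
            calc (1 - δ) / Iq ^ (1/p) * a' t ^ q
                = c t * ((1 - δ) * a' t * d t) := h3.symm
              _ ≤ c t * G' t (v (N t)) := h2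
              _ = g t (f t) := hgf.symm
          · rw [Set.indicator_of_notMem ht, hfzero t ht]
            simp
        have hpair_int := (key f hfm' hfi').1
        have hrhs_int : Integrable
            (fun t => ((1 - δ) / Iq ^ (1/p)) * S.indicator (fun s => a' s ^ q) t) μ :=
          hind_int.const_mul _
        have hlow : (1 - δ) / Iq ^ (1/p) * Iq ≤ ∫ t in I, g t (f t) := by
          have h1 : ∫ t in I, ((1 - δ) / Iq ^ (1/p)) * S.indicator (fun s => a' s ^ q) t
              = (1 - δ) / Iq ^ (1/p) * Iq := by
            rw [integral_const_mul, hJ]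
          rw [← h1]
          exact integral_mono hrhs_int hpair_int hpair_ge
        have hfinal : (1 - δ) * Iq ^ (1/q) = (1 - δ) / Iq ^ (1/p) * Iq := by
          have h2 : (1:ℝ) - 1/p = 1/q := by linarith
          have h1 : Iq / Iq ^ (1/p) = Iq ^ (1/q) := by
            rw [← h2, Real.rpow_sub hIqpos, Real.rpow_one]
          calc (1 - δ) * Iq ^ (1/q) = (1 - δ) * (Iq / Iq ^ (1/p)) := by rw [h1]
            _ = (1 - δ) / Iq ^ (1/p) * Iq := by ring
        rw [hfinal]
        calc (1 - δ) / Iq ^ (1/p) * Iq ≤ ∫ t in I, g t (f t) := hlow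
          _ ≤ b := hb ⟨f, hfm', hfi', hle1, rfl⟩
      by_contra hlt
      push_neg at hlt
      set Q : ℝ := Iq ^ (1 / q) with hQdef
      have hQpos' : 0 < Q := hQpos
      have hδ0 : 0 < (Q - b) / (2 * Q) := div_pos (by linarith) (by linarith)
      have hδ1 : (Q - b) / (2 * Q) < 1 := by
        rw [div_lt_one (by positivity)]
        nlinarith
      have := hstep _ hδ0 hδ1
      have hkey2 : (1 - (Q - b) / (2 * Q)) * Q = Q - (Q - b) / 2 := by
        field_simp
      rw [hkey2] at this
      linarith
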